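/- Let R be a (q,s) chain ring and let A be an n×m matrix over R in row canonical form. For each nonzero row k, let p_k be its pivot, c_k the index of the column containing p_k, and d_k = deg(p_k) (for a zero row set p_k = 0, c_k = 0, d_k = s). Then: (i) for all i ≥ k and all j, deg(A[i,j]) ≥ d_k; and (ii) if (i ≥ k and j < c_k) or (i > k and j ≤ c_k), then deg(A[i,j]) > d_k. -/

import Mathlib

open scoped BigOperators

section ChainRingDefs

variable {R : Type*} [CommRing R]

/-- For a shape `μ = (μ₁,…,μ_s)` (0-indexed as `μ : Fin s → ℕ`), the exponent of `π`
governing the `j`-th coordinate (0-indexed) of the module `R^μ`: the number of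
components of `μ` that are `≤ j`. -/
def shapeExp {s : ℕ} (μ : Fin s → ℕ) (j : ℕ) : ℕ :=
  (Finset.univ.filter fun i : Fin s => μ i ≤ j).card

/-- The last (largest) component `μ_s` of a shape (for monotone `μ`). -/
def shapeLast {s : ℕ} (μ : Fin s → ℕ) : ℕ := Finset.univ.sup μ

/-- The module `R^μ = ⟨1⟩^{μ₁} × ⟨π⟩^{μ₂−μ₁} × ⋯ × ⟨π^{s−1}⟩^{μ_s−μ_{s−1}}`,
realized as a submodule of `R^{μ_s}`. -/
def shapeModule (R : Type*) [CommRing R] (π : R) {s : ℕ} (μ : Fin s → ℕ) :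
    Submodule R (Fin (shapeLast μ) → R) :=
  Submodule.pi Set.univ fun j => Ideal.span {π ^ shapeExp μ (j : ℕ)}

/-- The module `M` has shape `μ`, i.e. `M ≅ R^μ`. -/
def HasShape (R : Type*) [CommRing R] (π : R) {s : ℕ} (μ : Fin s → ℕ)
    (M : Type*) [AddCommGroup M] [Module R M] : Prop :=
  Nonempty (M ≃ₗ[R] shapeModule R π μ)

/-- The row span of a matrix: the submodule of `R^m` generated by its rows. -/
def rowSpan (R : Type*) [CommRing R] {n m : ℕ} (A : Matrix (Fin n) (Fin m) R) :
    Submodule R (Fin m → R) :=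
  Submodule.span R (Set.range fun i => A i)

-- The degree of `a ∈ R`: the unique `l` with `a ∈ ⟨π^l⟩ \ ⟨π^{l+1}⟩` for `a ≠ 0`,
-- and `s` for `a = 0`.
open Classical in
noncomputable def degR (π : R) (s : ℕ) (a : R) : ℕ :=
  if a = 0 then s else sSup {l : ℕ | a ∈ Ideal.span {π ^ l}}

/-- `j` is the pivot position of the row `r`: the earliest entry among the entries of
least degree in that row. -/
def IsPivotIdx (π : R) (s : ℕ) {m : ℕ} (r : Fin m → R) (j : Fin m) : Prop :=
  (∀ k, degR π s (r j) ≤ degR π s (r k)) ∧ ∀ k, k < j → degR π s (r j) < degR π s (r k)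

/-- `V` is a complete set of residues modulo `π` containing `0`. -/
def IsCompleteResidues (π : R) (V : Set R) : Prop :=
  0 ∈ V ∧ ∀ a : R, ∃! v, v ∈ V ∧ a - v ∈ Ideal.span {π}

/-- The set `R(R,π^l) = {Σ_{i<l} a_i π^i : a_i ∈ V}` of residues modulo `π^l`. -/
def residueSet (π : R) (V : Set R) (l : ℕ) : Set R :=
  {x | ∃ a : Fin l → R, (∀ i, a i ∈ V) ∧ x = ∑ i, a i * π ^ (i : ℕ)}

/-- The matrix `A` is in row canonical form (with respect to the residue set `V`). -/
def IsRCF (π : R) (s : ℕ) (V : Set R) {n m : ℕ} (A : Matrix (Fin n) (Fin m) R) : Prop :=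
  -- (1) nonzero rows lie above zero rows
  (∀ i i' : Fin n, i < i' → A i' ≠ 0 → A i ≠ 0) ∧
  -- (2) pivots of smaller degree lie above pivots of larger degree; among pivots of
  -- equal degree, earlier pivots lie above later ones
  (∀ i i' : Fin n, ∀ j j' : Fin m, i < i' → A i ≠ 0 → A i' ≠ 0 →
      IsPivotIdx π s (A i) j → IsPivotIdx π s (A i') j' →
      degR π s (A i j) ≤ degR π s (A i' j') ∧
        (degR π s (A i j) = degR π s (A i' j') → j ≤ j')) ∧
  -- (3) every pivot equals `π^l` for some `0 ≤ l ≤ s-1`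
  (∀ i : Fin n, ∀ j : Fin m, A i ≠ 0 → IsPivotIdx π s (A i) j →
      degR π s (A i j) < s ∧ A i j = π ^ degR π s (A i j)) ∧
  -- (4) entries below a pivot in its column are zero; entries above lie in `R(R,π^l)`
  (∀ i : Fin n, ∀ j : Fin m, A i ≠ 0 → IsPivotIdx π s (A i) j →
      (∀ i' : Fin n, i < i' → A i' j = 0) ∧
      (∀ i' : Fin n, i' < i → A i' j ∈ residueSet π V (degR π s (A i j))))

/-- For a shape `κ` (0-indexed) and `i : Fin s`, the previous component `κ_{i-1}`
(`0` when `i = 0`); with the paper's 1-indexed convention this is `κ_i` for the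
0-indexed position `i` (whose 1-indexed position is `i+1`). -/
def prevVal {s : ℕ} (κ : Fin s → ℕ) (i : Fin s) : ℕ :=
  if (i : ℕ) = 0 then 0
  else κ ⟨(i : ℕ) - 1, lt_of_le_of_lt (Nat.sub_le _ _) i.isLt⟩

end ChainRingDefs


lemma exists_pivot' {R : Type*} [CommRing R] (π : R) (s : ℕ) {m : ℕ} (r : Fin m → R)
    (hr : r ≠ 0) : ∃ j, IsPivotIdx π s r j := by
  obtain ⟨j0, hj0⟩ := Function.ne_iff.mp hr
  have hne : (Finset.univ : Finset (Fin m)).Nonempty := ⟨j0, Finset.mem_univ _⟩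
  set d := Finset.univ.inf' hne (fun j => degR π s (r j)) with hd
  have hdle : ∀ k, d ≤ degR π s (r k) := fun k => Finset.inf'_le _ (Finset.mem_univ k)
  obtain ⟨j1, -, hj1⟩ := Finset.exists_mem_eq_inf' hne (fun j => degR π s (r j))
  set T := Finset.univ.filter (fun j => degR π s (r j) = d) with hT
  have hTne : T.Nonempty := ⟨j1, by simp [hT, hj1.symm]; rfl⟩
  have hmin : degR π s (r (T.min' hTne)) = d := by
    have := T.min'_mem hTne; simp only [hT, Finset.mem_filter] at this; exact this.2
  refine ⟨T.min' hTne, ?_, ?_⟩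
  · intro k; rw [hmin]; exact hdle k
  · intro k hk
    rw [hmin]
    rcases lt_or_eq_of_le (hdle k) with h | h
    · exact h
    · exfalso
      have : k ∈ T := by simp [hT, h.symm]
      exact absurd (T.min'_le k this) (not_le.mpr hk)

/-- In a row canonical form, entries in rows at or below row `k` have degree at least
the pivot degree `d_k`, strictly greater in the indicated region. -/
theorem rcf_degree_bounds {R : Type*} [CommRing R] [Fintype R] [IsLocalRing R] [IsPrincipalIdealRing R]
    (q s : ℕ) (hs : 0 < s) (π : R)
    (hmax : IsLocalRing.maximalIdeal R = Ideal.span {π})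
    (hnil : π ^ s = 0) (hnil' : π ^ (s - 1) ≠ 0)
    (hq : Nat.card (IsLocalRing.ResidueField R) = q)
    (V : Set R) (hV : IsCompleteResidues π V)
    {n m : ℕ} (A : Matrix (Fin n) (Fin m) R) (hA : IsRCF π s V A)
    (k : Fin n) (hk : A k ≠ 0) (c : Fin m) (hc : IsPivotIdx π s (A k) c) :
    (∀ i : Fin n, k ≤ i → ∀ j : Fin m, degR π s (A k c) ≤ degR π s (A i j)) ∧
    (∀ i : Fin n, ∀ j : Fin m, ((k ≤ i ∧ j < c) ∨ (k < i ∧ j ≤ c)) →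
      degR π s (A k c) < degR π s (A i j)) := by
  obtain ⟨h1, h2, h3, h4⟩ := hA
  have hdk : degR π s (A k c) < s := (h3 k c hk hc).1
  have deg0 : ∀ a : R, a = 0 → degR π s a = s := fun a ha => by simp [degR, ha]
  have key : ∀ i : Fin n, k < i → ∀ j : Fin m, degR π s (A k c) ≤ degR π s (A i j) ∧
      (j ≤ c → degR π s (A k c) < degR π s (A i j)) := by
    intro i hi j
    by_cases hAi : A i = 0
    · have hz : A i j = 0 := congrFun hAi j
      rw [deg0 _ hz]
      exact ⟨le_of_lt hdk, fun _ => hdk⟩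
    · obtain ⟨j', hj'⟩ := exists_pivot' π s (A i) hAi
      have h2' := h2 k i c j' hi hk hAi hc hj'
      refine ⟨le_trans h2'.1 (hj'.1 j), ?_⟩
      intro hjc
      rcases lt_or_eq_of_le hjc with hlt | heq
      · rcases lt_or_eq_of_le h2'.1 with h | h
        · exact lt_of_lt_of_le h (hj'.1 j)
        · have hcj' : c ≤ j' := h2'.2 h
          have hlt2 := hj'.2 j (lt_of_lt_of_le hlt hcj')
          omega
      · have hz : A i c = 0 := (h4 k c hk hc).1 i hi
        rw [heq, deg0 _ hz]
        exact hdk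
  constructor
  · intro i hik j
    rcases lt_or_eq_of_le hik with h | h
    · exact (key i h j).1
    · cases h; exact hc.1 j
  · intro i j hij
    rcases hij with ⟨hki, hjc⟩ | ⟨hki, hjc⟩
    · rcases lt_or_eq_of_le hki with h | h
      · exact (key i h j).2 (le_of_lt hjc)
      · cases h; exact hc.2 j hjc
    · exact (key i hki j).2 hjc
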